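/- Let n ≥ 3 and 2n/(n+2) < p ≤ 2. There exists a constant c = c(n,p) such that for every x₀ ∈ ℝⁿ, every 0 < R₀ < 1, every vector field W ∈ L^{2p/(2−p)}(B_{R₀}(x₀)), every u ∈ C^1(B_{R₀}(x₀)) and every τ > 0, one has ‖(log r) e^{−τφ(r)} r² W·∇u‖_{L^p(B_{R₀}(x₀), r^{−n}dx)} ≤ c ‖W‖_{L^{2p/(2−p)}(B_{R₀}(x₀))} ‖(log r)^{−1} e^{−τφ(r)} r ∇u‖_{L^2(B_{R₀}(x₀), r^{−n}dx)}. -/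

import Mathlib

open MeasureTheory Metric ENNReal

noncomputable section

/-- The `i`-th partial derivative of `u`. -/
def pderivC {n : ℕ} (u : EuclideanSpace ℝ (Fin n) → ℂ) (i : Fin n)
    (x : EuclideanSpace ℝ (Fin n)) : ℂ :=
  fderiv ℝ u x (EuclideanSpace.single i 1)

/-- The Laplacian of `u`. -/
def lapl {n : ℕ} (u : EuclideanSpace ℝ (Fin n) → ℂ) (x : EuclideanSpace ℝ (Fin n)) : ℂ :=
  ∑ i, fderiv ℝ (fderiv ℝ u) x (EuclideanSpace.single i 1) (EuclideanSpace.single i 1)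

/-- The (Euclidean) norm of the gradient of `u`. -/
def gradN {n : ℕ} (u : EuclideanSpace ℝ (Fin n) → ℂ) (x : EuclideanSpace ℝ (Fin n)) : ℝ :=
  Real.sqrt (∑ i, ‖pderivC u i x‖ ^ 2)

/-- The term `W · ∇u`. -/
def Wgrad {n : ℕ} (W : EuclideanSpace ℝ (Fin n) → EuclideanSpace ℂ (Fin n))
    (u : EuclideanSpace ℝ (Fin n) → ℂ) (x : EuclideanSpace ℝ (Fin n)) : ℂ :=
  ∑ i, W x i * pderivC u i x

/-- `u` is a solution of `Δu + W·∇u + Vu = 0` on `B`: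
`u ∈ L^∞_loc(B) ∩ W^{1,2}_loc(B) ∩ W^{2,p}_loc(B)` for some `p ∈ (2n/(n+2), 2]`, and the
equation holds a.e. on `B`. -/
def IsSolution {n : ℕ} (B : Set (EuclideanSpace ℝ (Fin n)))
    (W : EuclideanSpace ℝ (Fin n) → EuclideanSpace ℂ (Fin n))
    (V : EuclideanSpace ℝ (Fin n) → ℂ)
    (u : EuclideanSpace ℝ (Fin n) → ℂ) : Prop :=
  ∃ p : ℝ, 2 * (n : ℝ) / (n + 2) < p ∧ p ≤ 2 ∧
    (∀ Kc : Set (EuclideanSpace ℝ (Fin n)), Kc ⊆ B → IsCompact Kc →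
      eLpNorm u ⊤ (volume.restrict Kc) < ⊤ ∧
      eLpNorm u 2 (volume.restrict Kc) < ⊤ ∧
      eLpNorm (fun x => gradN u x) 2 (volume.restrict Kc) < ⊤ ∧
      eLpNorm (fun x => ‖fderiv ℝ (fderiv ℝ u) x‖) (ENNReal.ofReal p) (volume.restrict Kc) < ⊤) ∧
    (∀ᵐ x ∂(volume.restrict B),
      DifferentiableAt ℝ u x ∧ DifferentiableAt ℝ (fderiv ℝ u) x ∧
      lapl u x + Wgrad W u x + V x * u x = 0)

/-- The weight function `φ(r) = log r + log ((log r)^2)`. -/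
def phiC (r : ℝ) : ℝ := Real.log r + Real.log ((Real.log r) ^ 2)

/-- `1/s` for an extended-real exponent `s`, interpreted as `0` when `s = ∞`. -/
def inva (s : ℝ≥0∞) : ℝ := s⁻¹.toReal

/-- The weighted norm `‖g‖_{L^p(E, r^{-n} dx)}` (here `g` stands for the pointwise absolute
value of the function being measured). -/
def wLp {n : ℕ} (x₀ : EuclideanSpace ℝ (Fin n)) (p : ℝ)
    (g : EuclideanSpace ℝ (Fin n) → ℝ) (E : Set (EuclideanSpace ℝ (Fin n))) : ℝ≥0∞ :=
  (∫⁻ x in E, ENNReal.ofReal (|g x| ^ p * ‖x - x₀‖ ^ (-(n : ℝ)))) ^ (1 / p)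

/-- Elementary estimate: `(log r)^2 r^a ≤ 4/a^2` on `(0,1)`. -/
lemma key_log {a r : ℝ} (ha : 0 < a) (hr0 : 0 < r) (hr1 : r < 1) :
    Real.log r ^ 2 * r ^ a ≤ 4 / a ^ 2 := by
  have hε : 0 < a / 2 := by linarith
  have h1 : -Real.log r ≤ r ^ (-(a/2)) / (a/2) := by
    have h := Real.log_le_rpow_div (le_of_lt (inv_pos.mpr hr0)) hε
    rwa [Real.log_inv, Real.inv_rpow hr0.le, ← Real.rpow_neg hr0.le] at h
  have h2 : (-Real.log r) * r ^ (a/2) ≤ 2 / a := by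
    have h := mul_le_mul_of_nonneg_right h1 (Real.rpow_nonneg hr0.le (a/2))
    calc (-Real.log r) * r ^ (a/2) ≤ r ^ (-(a/2)) / (a/2) * r ^ (a/2) := h
    _ = (r ^ (-(a/2)) * r ^ (a/2)) / (a/2) := by ring
    _ = 2 / a := by rw [← Real.rpow_add hr0]; norm_num
  have hnn : 0 ≤ (-Real.log r) * r ^ (a/2) :=
    mul_nonneg (by nlinarith [Real.log_neg hr0 hr1]) (Real.rpow_nonneg hr0.le _)
  have h3 := pow_le_pow_left₀ hnn h2 2
  calc Real.log r ^ 2 * r ^ a = ((-Real.log r) * r ^ (a/2)) ^ 2 := by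
        rw [mul_pow, neg_pow, ← Real.rpow_natCast (r ^ (a/2)) 2, ← Real.rpow_mul hr0.le]
        norm_num
  _ ≤ (2/a)^2 := h3
  _ = 4 / a^2 := by ring

/-- Cauchy–Schwarz for the drift term. -/
lemma wgrad_le {n : ℕ} (W : EuclideanSpace ℝ (Fin n) → EuclideanSpace ℂ (Fin n))
    (u : EuclideanSpace ℝ (Fin n) → ℂ) (x : EuclideanSpace ℝ (Fin n)) :
    ‖Wgrad W u x‖ ≤ ‖W x‖ * gradN u x := by
  calc ‖Wgrad W u x‖ ≤ ∑ i, ‖W x i * pderivC u i x‖ := norm_sum_le _ _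
  _ = ∑ i, ‖W x i‖ * ‖pderivC u i x‖ := by simp [norm_mul]
  _ ≤ Real.sqrt (∑ i, ‖W x i‖^2) * Real.sqrt (∑ i, ‖pderivC u i x‖^2) :=
      Real.sum_mul_le_sqrt_mul_sqrt _ _ _
  _ = ‖W x‖ * gradN u x := by rw [EuclideanSpace.norm_eq, gradN]

/-- The weighted norm is an `eLpNorm`. -/
lemma wLp_eq_eLpNorm {n : ℕ} (x₀ : EuclideanSpace ℝ (Fin n)) {q : ℝ} (hq : 0 < q)
    (g : EuclideanSpace ℝ (Fin n) → ℝ) (E : Set (EuclideanSpace ℝ (Fin n))) :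
    wLp x₀ q g E =
      eLpNorm (fun x => g x * ‖x - x₀‖ ^ (-(n : ℝ)/q)) (ENNReal.ofReal q) (volume.restrict E) := by
  rw [eLpNorm_eq_lintegral_rpow_enorm_toReal (by simp [hq, hq.ne']) (by simp),
    ENNReal.toReal_ofReal hq.le]
  unfold wLp
  congr 1
  refine lintegral_congr fun x => ?_
  rw [← ofReal_norm_eq_enorm, ENNReal.ofReal_rpow_of_nonneg (norm_nonneg _) hq.le]
  congr 1
  rw [Real.norm_eq_abs, abs_mul, abs_of_nonneg (Real.rpow_nonneg (norm_nonneg _) _),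
    Real.mul_rpow (abs_nonneg _) (Real.rpow_nonneg (norm_nonneg _) _),
    ← Real.rpow_mul (norm_nonneg _), div_mul_cancel₀ _ hq.ne']

/-- The pointwise estimate. -/
lemma pointwise_bound {n : ℕ} (hn : 3 ≤ n) {p a : ℝ} (hp0 : 0 < p) (ha : 0 < a)
    (haeq : a = 1 + (n : ℝ)/2 - (n : ℝ)/p)
    (x₀ x : EuclideanSpace ℝ (Fin n)) (hx : ‖x - x₀‖ < 1)
    (W : EuclideanSpace ℝ (Fin n) → EuclideanSpace ℂ (Fin n))
    (u : EuclideanSpace ℝ (Fin n) → ℂ) (τ : ℝ) :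
    ‖(Real.log ‖x - x₀‖ * Real.exp (-τ * phiC ‖x - x₀‖) *
        (‖x - x₀‖ ^ 2 * ‖Wgrad W u x‖)) * ‖x - x₀‖ ^ (-(n : ℝ)/p)‖ ≤
      ‖(4/a^2) * (‖W x‖ * (((Real.log ‖x - x₀‖)⁻¹ * Real.exp (-τ * phiC ‖x - x₀‖) *
        (‖x - x₀‖ * gradN u x)) * ‖x - x₀‖ ^ (-(n : ℝ)/2)))‖ := by
  have hn0 : (0 : ℝ) < n := by exact_mod_cast Nat.lt_of_lt_of_le (by norm_num) hn
  set r := ‖x - x₀‖ with hrdef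
  have hr0 : (0:ℝ) ≤ r := norm_nonneg _
  rcases hr0.eq_or_lt with h0 | hrpos
  · rw [Real.norm_eq_abs, Real.norm_eq_abs]
    have hz : r ^ (-(n : ℝ)/p) = 0 := by
      rw [← h0, Real.zero_rpow (ne_of_lt (div_neg_of_neg_of_pos (by linarith) hp0))]
    rw [hz, mul_zero, abs_zero]
    exact abs_nonneg _
  · have hlog : Real.log r < 0 := Real.log_neg hrpos hx
    set L := Real.log r with hL
    set E := Real.exp (-τ * phiC r) with hE
    have hEpos : 0 < E := Real.exp_pos _
    set G := gradN u x with hG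
    have hGnn : 0 ≤ G := Real.sqrt_nonneg _
    set t := -L with ht
    have ht0 : 0 < t := by simp only [ht]; linarith
    have habsL : |L| = t := abs_of_neg hlog
    -- rewrite both sides without absolute values
    rw [Real.norm_eq_abs, Real.norm_eq_abs]
    simp only [abs_mul, abs_inv, habsL, abs_of_pos hEpos, abs_of_nonneg hGnn,
      abs_of_nonneg hr0, abs_of_nonneg (Real.rpow_nonneg hr0 (-(n:ℝ)/p)),
      abs_of_nonneg (Real.rpow_nonneg hr0 (-(n:ℝ)/2)),
      abs_norm, abs_pow, abs_of_nonneg (show (0:ℝ) ≤ 4/a^2 by positivity)]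
    -- key facts
    have hkey : t^2 * r ^ a ≤ 4/a^2 := by
      have := key_log ha hrpos hx
      calc t^2 * r ^ a = L^2 * r ^ a := by rw [ht, neg_pow]; norm_num
      _ ≤ 4/a^2 := this
    have hCS : ‖Wgrad W u x‖ ≤ ‖W x‖ * G := wgrad_le W u x
    -- exponent identity
    have hrr : r ^ 2 * r ^ (-(n:ℝ)/p) = r ^ a * (r * r ^ (-(n:ℝ)/2)) := by
      rw [show r * r ^ (-(n:ℝ)/2) = r ^ (1 + (-(n:ℝ)/2)) from by
            rw [Real.rpow_add hrpos, Real.rpow_one],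
        ← Real.rpow_natCast r 2, ← Real.rpow_add hrpos, ← Real.rpow_add hrpos]
      congr 1
      rw [haeq]; push_cast; ring
    set D := t⁻¹ * (E * (r * r ^ (-(n:ℝ)/2))) with hD
    have hDnn : 0 ≤ D := by
      have := Real.rpow_nonneg hr0 (-(n:ℝ)/2)
      positivity
    have hident : t * E * (r ^ 2 * ‖Wgrad W u x‖) * r ^ (-(n:ℝ)/p)
        = (t^2 * r ^ a) * (‖Wgrad W u x‖ * D) := by
      have htt : t = t^2 * t⁻¹ := by field_simp [pow_two]
      calc t * E * (r ^ 2 * ‖Wgrad W u x‖) * r ^ (-(n:ℝ)/p)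
          = t * E * ‖Wgrad W u x‖ * (r ^ 2 * r ^ (-(n:ℝ)/p)) := by ring
      _ = t * E * ‖Wgrad W u x‖ * (r ^ a * (r * r ^ (-(n:ℝ)/2))) := by rw [hrr]
      _ = (t^2 * t⁻¹) * E * ‖Wgrad W u x‖ * (r ^ a * (r * r ^ (-(n:ℝ)/2))) := by rw [← htt]
      _ = (t^2 * r ^ a) * (‖Wgrad W u x‖ * D) := by rw [hD]; ring
    calc t * E * (r ^ 2 * ‖Wgrad W u x‖) * r ^ (-(n:ℝ)/p)
        = (t^2 * r ^ a) * (‖Wgrad W u x‖ * D) := hident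
    _ ≤ (4/a^2) * ((‖W x‖ * G) * D) :=
        mul_le_mul hkey (mul_le_mul_of_nonneg_right hCS hDnn)
          (mul_nonneg (norm_nonneg _) hDnn) (by positivity)
    _ = 4/a^2 * (‖W x‖ * (t⁻¹ * E * (r * G) * r ^ (-(n:ℝ)/2))) := by rw [hD]; ring

/-- inequality (3.3)/(3.7): weighted Hölder estimate for the drift term. -/
theorem statement13 (n : ℕ) (hn : 3 ≤ n) (p : ℝ)
    (hp : 2 * (n : ℝ) / (n + 2) < p) (hp2 : p ≤ 2) :
    ∃ c : ℝ, 0 < c ∧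
      ∀ (x₀ : EuclideanSpace ℝ (Fin n)) (R₀ : ℝ), 0 < R₀ → R₀ < 1 →
      ∀ (W : EuclideanSpace ℝ (Fin n) → EuclideanSpace ℂ (Fin n))
        (u : EuclideanSpace ℝ (Fin n) → ℂ),
        MemLp W (ENNReal.ofReal (2 * p) / ENNReal.ofReal (2 - p))
          (volume.restrict (ball x₀ R₀)) →
        ContDiffOn ℝ 1 u (ball x₀ R₀) →
        ∀ τ : ℝ, 0 < τ →
          wLp x₀ p (fun x => Real.log ‖x - x₀‖ * Real.exp (-τ * phiC ‖x - x₀‖) *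
              (‖x - x₀‖ ^ 2 * ‖Wgrad W u x‖)) (ball x₀ R₀) ≤
            ENNReal.ofReal c *
              eLpNorm W (ENNReal.ofReal (2 * p) / ENNReal.ofReal (2 - p))
                (volume.restrict (ball x₀ R₀)) *
              wLp x₀ 2 (fun x => (Real.log ‖x - x₀‖)⁻¹ * Real.exp (-τ * phiC ‖x - x₀‖) *
                (‖x - x₀‖ * gradN u x)) (ball x₀ R₀) := by
  have hn0 : (0 : ℝ) < n := by exact_mod_cast Nat.lt_of_lt_of_le (by norm_num) hn
  have hp0 : 0 < p := lt_trans (div_pos (by linarith) (by linarith)) hp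
  set a := 1 + (n : ℝ)/2 - (n : ℝ)/p with ha_def
  have ha : 0 < a := by
    have h1 : 2*(n:ℝ) < p * (n+2) := by
      rw [div_lt_iff₀ (by linarith : (0:ℝ) < (n:ℝ)+2)] at hp; linarith
    have h2 : a = (p*((n:ℝ)+2) - 2*n) / (2*p) := by rw [ha_def]; field_simp; ring
    rw [h2]; exact div_pos (by linarith) (by linarith)
  refine ⟨4/a^2, by positivity, ?_⟩
  intro x₀ R₀ hR0 hR1 W u hW hu τ hτ
  rw [wLp_eq_eLpNorm x₀ hp0, wLp_eq_eLpNorm x₀ two_pos]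
  set μ := volume.restrict (ball x₀ R₀) with hμ
  set Q := ENNReal.ofReal (2*p) / ENNReal.ofReal (2-p) with hQ
  have hpqr : 1 / ENNReal.ofReal p = 1 / Q + 1 / ENNReal.ofReal 2 := by
    rcases eq_or_lt_of_le hp2 with he | hlt
    · rw [hQ, he]
      norm_num
      rw [ENNReal.div_zero (by norm_num), ENNReal.inv_top, zero_add]
    · have h2p : 0 < 2 - p := by linarith
      have hq' : 0 < 2*p/(2-p) := by positivity
      rw [hQ, ← ENNReal.ofReal_div_of_pos h2p, one_div, one_div, one_div,
        ← ENNReal.ofReal_inv_of_pos hq', ← ENNReal.ofReal_inv_of_pos hp0,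
        ← ENNReal.ofReal_inv_of_pos two_pos,
        ← ENNReal.ofReal_add (by positivity) (by positivity)]
      congr 1
      field_simp
      ring
  -- measurability
  have hnorm : Measurable fun x : EuclideanSpace ℝ (Fin n) => ‖x - x₀‖ :=
    (continuous_id.sub continuous_const).norm.measurable
  have hgrad : Measurable fun x => gradN u x := by
    have h := fun i : Fin n => measurable_fderiv_apply_const ℝ u (EuclideanSpace.single i 1)
    unfold gradN pderivC
    exact (Finset.measurable_sum _ fun i _ => ((h i).norm.pow_const 2)).sqrt
  have hlogm := Real.measurable_log.comp hnorm
  have hphi : Measurable fun x => phiC ‖x - x₀‖ := by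
    unfold phiC
    exact hlogm.add (Real.measurable_log.comp (hlogm.pow_const 2))
  have hrpow : Measurable fun x : EuclideanSpace ℝ (Fin n) => ‖x - x₀‖ ^ (-(n:ℝ)/2) := by
    have heq : (fun x : EuclideanSpace ℝ (Fin n) => ‖x - x₀‖ ^ (-(n:ℝ)/2)) = fun x =>
        if ‖x - x₀‖ = 0 then (0:ℝ) ^ (-(n:ℝ)/2) else
          Real.exp (Real.log ‖x - x₀‖ * (-(n:ℝ)/2)) := by
      funext x
      by_cases h : ‖x - x₀‖ = 0
      · simp [h]
      · have hpos : 0 < ‖x - x₀‖ := lt_of_le_of_ne (norm_nonneg _) (Ne.symm h)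
        simp [h, Real.rpow_def_of_pos hpos]
    rw [heq]
    exact Measurable.ite (hnorm (measurableSet_singleton 0)) measurable_const
      (Real.measurable_exp.comp ((Real.measurable_log.comp hnorm).mul_const _))
  have hB : Measurable fun x => ((Real.log ‖x - x₀‖)⁻¹ * Real.exp (-τ * phiC ‖x - x₀‖) *
      (‖x - x₀‖ * gradN u x)) * ‖x - x₀‖ ^ (-(n:ℝ)/2) := by
    exact ((hlogm.inv.mul (Real.measurable_exp.comp (measurable_const.mul hphi))).mul
      (hnorm.mul hgrad)).mul hrpow
  -- main chain
  calc eLpNorm (fun x => (Real.log ‖x - x₀‖ * Real.exp (-τ * phiC ‖x - x₀‖) *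
          (‖x - x₀‖ ^ 2 * ‖Wgrad W u x‖)) * ‖x - x₀‖ ^ (-(n : ℝ)/p))
        (ENNReal.ofReal p) μ
      ≤ eLpNorm ((4/a^2) • fun x => ‖W x‖ *
          (((Real.log ‖x - x₀‖)⁻¹ * Real.exp (-τ * phiC ‖x - x₀‖) *
            (‖x - x₀‖ * gradN u x)) * ‖x - x₀‖ ^ (-(n : ℝ)/2))) (ENNReal.ofReal p) μ := by
        refine eLpNorm_mono_ae (ae_restrict_of_forall_mem measurableSet_ball fun x hx => ?_)
        simp only [Pi.smul_apply, smul_eq_mul]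
        have hx1 : ‖x - x₀‖ < 1 := by
          rw [mem_ball, dist_eq_norm] at hx; linarith
        exact pointwise_bound hn hp0 ha ha_def x₀ x hx1 W u τ
    _ = ENNReal.ofReal (4/a^2) * eLpNorm (fun x => ‖W x‖ *
          (((Real.log ‖x - x₀‖)⁻¹ * Real.exp (-τ * phiC ‖x - x₀‖) *
            (‖x - x₀‖ * gradN u x)) * ‖x - x₀‖ ^ (-(n : ℝ)/2))) (ENNReal.ofReal p) μ := by
        rw [eLpNorm_const_smul, Real.enorm_eq_ofReal (by positivity)]
    _ ≤ ENNReal.ofReal (4/a^2) * (eLpNorm W Q μ *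
          eLpNorm (fun x => ((Real.log ‖x - x₀‖)⁻¹ * Real.exp (-τ * phiC ‖x - x₀‖) *
            (‖x - x₀‖ * gradN u x)) * ‖x - x₀‖ ^ (-(n : ℝ)/2)) (ENNReal.ofReal 2) μ) := by
        gcongr
        haveI : ENNReal.HolderTriple Q (ENNReal.ofReal 2) (ENNReal.ofReal p) :=
          ⟨by simpa only [one_div] using hpqr.symm⟩
        exact (eLpNorm_le_eLpNorm_mul_eLpNorm'_of_norm hW.1 hB.aestronglyMeasurable
          (fun w s => ‖w‖ * s) 1
          (Filter.Eventually.of_forall fun x => le_of_eq (by rw [norm_mul, norm_norm, NNReal.coe_one, one_mul]))).trans_eq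
          (by rw [ENNReal.coe_one, one_mul])
    _ = ENNReal.ofReal (4/a^2) * eLpNorm W Q μ *
          eLpNorm (fun x => ((Real.log ‖x - x₀‖)⁻¹ * Real.exp (-τ * phiC ‖x - x₀‖) *
            (‖x - x₀‖ * gradN u x)) * ‖x - x₀‖ ^ (-(n : ℝ)/2)) (ENNReal.ofReal 2) μ := by
        rw [mul_assoc]
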